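/- arXiv:2003.00844 — 2 statements merged into one kernel-verified Lean document; each statement's English description precedes it below -/
import Mathlib

section
/- Let f be a symmetric separable property, S ⊆ D, and suppose there is an estimator f̂ mapping S-pseudo profiles to reals such that for every distribution p and φ_S drawn from p (i.e., n i.i.d. samples from p, then forming the S-pseudo profile), Pr[|f_S(p) − f̂(φ_S)| ≥ ε] ≤ δ. Then for any finite set F of positive integers and any β ∈ (0,1], the (β,S)-approximate pseudo PML distribution p^β_{φ_S} satisfies Pr[|f_S(p) − f_S(p^β_{φ_S})| ≥ 2ε] ≤ (δ·(n+1)^{|F|}/β)·1 + Pr[Freq(φ_S) ⊄ F], where the first term can be restricted to the event Freq(φ_S) ⊆ F. -/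
open Finset
open scoped BigOperators Classical

namespace PML

noncomputable section

variable {D : Type*} [Fintype D] [DecidableEq D]

/-- `p` is a probability distribution on the finite domain `D`. -/
def IsDist (p : D → ℝ) : Prop := (∀ x, 0 ≤ p x) ∧ ∑ x, p x = 1

/-- Probability of observing the sequence `y` of `n` i.i.d. samples from `p`. -/
def seqProb (n : ℕ) (p : D → ℝ) (y : Fin n → D) : ℝ := ∏ i, p (y i)

/-- Probability of an event over sequences of `n` i.i.d. samples from `p`. -/
def prEvent (n : ℕ) (p : D → ℝ) (P : (Fin n → D) → Prop) : ℝ :=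
  ∑ y : Fin n → D, if P y then seqProb n p y else 0

/-- Frequency (multiplicity) of symbol `x` in the sequence `y`. -/
def freq (n : ℕ) (y : Fin n → D) (x : D) : ℕ :=
  (Finset.univ.filter (fun i => y i = x)).card

/-- The `S`-pseudo profile of the sequence `y`: the number of elements of `S`
with frequency `j`. -/
def profS (n : ℕ) (S : Finset D) (y : Fin n → D) : ℕ → ℕ :=
  fun j => (S.filter (fun x => freq n y x = j)).card

/-- Probability under `p` of observing the `S`-pseudo profile `φ` (on positive
frequencies). -/
def profProb (n : ℕ) (p : D → ℝ) (S : Finset D) (φ : ℕ → ℕ) : ℝ :=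
  ∑ y : Fin n → D, if (∀ j, 1 ≤ j → profS n S y j = φ j) then seqProb n p y else 0

/-- The set of distinct (positive) frequencies appearing in a profile `φ`. -/
def Freqs (φ : ℕ → ℕ) : Set ℕ := {j | 1 ≤ j ∧ φ j ≠ 0}

set_option linter.unusedSectionVars false

lemma seqProb_nonneg {n : ℕ} {p : D → ℝ} (hp : ∀ x, 0 ≤ p x) (y : Fin n → D) :
    0 ≤ seqProb n p y :=
  Finset.prod_nonneg fun i _ => hp (y i)

lemma prEvent_nonneg {n : ℕ} {p : D → ℝ} (hp : ∀ x, 0 ≤ p x)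
    (P : (Fin n → D) → Prop) : 0 ≤ prEvent n p P :=
  Finset.sum_nonneg fun y _ => by
    by_cases h : P y <;> simp [h, seqProb_nonneg hp]

lemma freq_le (n : ℕ) (y : Fin n → D) (x : D) : freq n y x ≤ n :=
  (Finset.card_filter_le _ _).trans (by simp)

lemma profS_le {n : ℕ} {S : Finset D} {y : Fin n → D} {j : ℕ} (hj : 1 ≤ j) :
    profS n S y j ≤ n := by
  have h1 : profS n S y j ≤ ∑ x ∈ S.filter (fun x => freq n y x = j), freq n y x := by
    unfold profS
    rw [Finset.card_eq_sum_ones]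
    refine Finset.sum_le_sum fun x hx => ?_
    rw [Finset.mem_filter] at hx
    omega
  have h2 : ∑ x ∈ S.filter (fun x => freq n y x = j), freq n y x
      ≤ ∑ x : D, freq n y x :=
    Finset.sum_le_sum_of_subset (Finset.subset_univ _)
  have h3 : ∑ x : D, freq n y x = n := by
    unfold freq
    rw [← Finset.card_eq_sum_card_fiberwise (f := y) (t := Finset.univ)
      (fun i _ => Finset.mem_univ _)]
    simp
  omega

lemma profS_eq_zero {n : ℕ} {S : Finset D} {y : Fin n → D} {j : ℕ} (hj : n < j) :
    profS n S y j = 0 := by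
  unfold profS
  rw [Finset.card_eq_zero, Finset.filter_eq_empty_iff]
  intro x _
  have := freq_le n y x
  omega

lemma profS_zero (n : ℕ) (S : Finset D) (y : Fin n → D) :
    profS n S y 0 = S.card - ∑ j ∈ Finset.Icc 1 n, profS n S y j := by
  have hsum : ∑ j ∈ Finset.Icc 1 n, profS n S y j
      = (S.filter (fun x => freq n y x ≠ 0)).card := by
    rw [Finset.card_eq_sum_card_fiberwise (f := freq n y) (t := Finset.Icc 1 n)]
    · refine Finset.sum_congr rfl fun b hb => ?_
      rw [Finset.mem_Icc] at hb
      unfold profS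
      congr 1
      rw [Finset.filter_filter]
      ext x
      simp only [Finset.mem_filter, and_congr_right_iff]
      intro _
      omega
    · intro x hx
      rw [Finset.mem_coe, Finset.mem_filter] at hx
      rw [Finset.mem_coe, Finset.mem_Icc]
      exact ⟨by omega, freq_le n y x⟩
  rw [hsum]
  have h3 := Finset.card_filter_add_card_filter_not
    (s := S) (p := fun x => freq n y x ≠ 0)
  have h2 : S.filter (fun x => ¬ freq n y x ≠ 0) = S.filter (fun x => freq n y x = 0) := by
    refine Finset.filter_congr fun x _ => ?_
    simp
  rw [h2] at h3
  have h0 : profS n S y 0 = (S.filter (fun x => freq n y x = 0)).card := rfl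
  omega

lemma profS_ext {n : ℕ} {S : Finset D} {y y' : Fin n → D}
    (h : ∀ j, 1 ≤ j → profS n S y j = profS n S y' j) :
    profS n S y = profS n S y' := by
  funext j
  rcases Nat.eq_zero_or_pos j with hj | hj
  · subst hj
    rw [profS_zero, profS_zero]
    congr 1
    refine Finset.sum_congr rfl fun i hi => ?_
    rw [Finset.mem_Icc] at hi
    exact h i hi.1
  · exact h j hj

def key (n : ℕ) (S : Finset D) (F : Finset ℕ) (y : Fin n → D) :
    {x // x ∈ F} → Fin (n+1) :=
  fun i => ⟨min (profS n S y i) n, Nat.lt_succ_of_le (min_le_right _ _)⟩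

def recO (S : Finset D) (n : ℕ) (F : Finset ℕ) (k : {x // x ∈ F} → Fin (n+1)) :
    ℕ → ℕ :=
  fun j => if j = 0 then
      S.card - ∑ i ∈ Finset.Icc 1 n, (if h : i ∈ F then (k ⟨i, h⟩ : ℕ) else 0)
    else if h : j ∈ F then (k ⟨j, h⟩ : ℕ) else 0

lemma recO_key {n : ℕ} {S : Finset D} {F : Finset ℕ} {y : Fin n → D}
    (h : Freqs (profS n S y) ⊆ ↑F) :
    recO S n F (key n S F y) = profS n S y := by
  have hzero : ∀ j, 1 ≤ j → j ∉ F → profS n S y j = 0 := by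
    intro j hj hF
    by_contra hne
    exact hF (h ⟨hj, hne⟩)
  funext j
  unfold recO
  by_cases hj : j = 0
  · subst hj
    rw [if_pos rfl, profS_zero]
    congr 1
    refine Finset.sum_congr rfl fun i hi => ?_
    rw [Finset.mem_Icc] at hi
    by_cases hF : i ∈ F
    · rw [dif_pos hF]
      simp only [key]
      exact min_eq_left (profS_le hi.1)
    · rw [dif_neg hF]
      exact (hzero i hi.1 hF).symm
  · rw [if_neg hj]
    have h1 : 1 ≤ j := Nat.one_le_iff_ne_zero.mpr hj
    by_cases hF : j ∈ F
    · rw [dif_pos hF]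
      simp only [key]
      exact min_eq_left (profS_le h1)
    · rw [dif_neg hF]
      exact (hzero j h1 hF).symm




lemma profProb_le_of_bad (n : ℕ) (S : Finset D) (g : ℝ → ℝ)
    (p : D → ℝ) (hp : IsDist p) (fhat : (ℕ → ℕ) → ℝ) (ε δ β : ℝ)
    (hβ0 : 0 < β) (hβ1 : β ≤ 1)
    (hest : ∀ q : D → ℝ, IsDist q →
      prEvent n q (fun y => ε ≤ |(∑ x ∈ S, g (q x)) - fhat (profS n S y)|) ≤ δ)
    (pβ : (ℕ → ℕ) → (D → ℝ))
    (hpβdist : ∀ φ : ℕ → ℕ, IsDist (pβ φ))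
    (hpβapprox : ∀ (φ : ℕ → ℕ) (q : D → ℝ), IsDist q →
      β * profProb n q S φ ≤ profProb n (pβ φ) S φ)
    (y₀ : Fin n → D)
    (hbad : 2 * ε ≤ |(∑ x ∈ S, g (p x)) - ∑ x ∈ S, g (pβ (profS n S y₀) x)|) :
    profProb n p S (profS n S y₀) ≤ δ / β := by
  have hδ0 : 0 ≤ δ := le_trans (prEvent_nonneg hp.1 _) (hest p hp)
  have hq : ∀ q : D → ℝ, IsDist q →
      ε ≤ |(∑ x ∈ S, g (q x)) - fhat (profS n S y₀)| →
      profProb n q S (profS n S y₀) ≤ δ := by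
    intro q hqd hqe
    refine le_trans ?_ (hest q hqd)
    unfold profProb prEvent
    refine Finset.sum_le_sum fun y _ => ?_
    by_cases hm : ∀ j, 1 ≤ j → profS n S y j = profS n S y₀ j
    · rw [if_pos hm]
      have heq : profS n S y = profS n S y₀ := profS_ext hm
      rw [if_pos (show ε ≤ |(∑ x ∈ S, g (q x)) - fhat (profS n S y)| by rw [heq]; exact hqe)]
    · rw [if_neg hm]
      by_cases h2 : ε ≤ |(∑ x ∈ S, g (q x)) - fhat (profS n S y)| <;>
        simp [h2, seqProb_nonneg hqd.1]
  by_cases hc : ε ≤ |(∑ x ∈ S, g (p x)) - fhat (profS n S y₀)|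
  · have h1 := hq p hp hc
    have h2 : δ ≤ δ / β := by
      rw [le_div_iff₀ hβ0]; nlinarith
    linarith
  · push_neg at hc
    have hc2 : ε ≤ |(∑ x ∈ S, g (pβ (profS n S y₀) x)) - fhat (profS n S y₀)| := by
      by_contra h
      push_neg at h
      have htri := abs_sub_le (∑ x ∈ S, g (p x)) (fhat (profS n S y₀))
        (∑ x ∈ S, g (pβ (profS n S y₀) x))
      rw [abs_sub_comm (fhat (profS n S y₀))] at htri
      linarith
    have h1 := hq (pβ (profS n S y₀)) (hpβdist _) hc2
    have h2 := hpβapprox (profS n S y₀) p hp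
    rw [le_div_iff₀ hβ0]
    linarith



/-- Theorem 3.3: if an estimator `f̂` on `S`-pseudo profiles estimates
`f_S(p) = Σ_{x∈S} g(p_x)` within `ε` except with probability `δ` (for every
distribution), then for any finite frequency set `F`, any `(β,S)`-approximate
pseudo PML distribution family satisfies
`Pr[|f_S(p) − f_S(p^β_{φ_S})| ≥ 2ε] ≤ δ(n+1)^{|F|}/β + Pr[Freq(φ_S) ⊄ F]`. -/
theorem pseudo_pml_estimation (n : ℕ) (S : Finset D) (g : ℝ → ℝ)
    (p : D → ℝ) (hp : IsDist p) (fhat : (ℕ → ℕ) → ℝ) (ε δ β : ℝ)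
    (hβ0 : 0 < β) (hβ1 : β ≤ 1)
    (hest : ∀ q : D → ℝ, IsDist q →
      prEvent n q (fun y => ε ≤ |(∑ x ∈ S, g (q x)) - fhat (profS n S y)|) ≤ δ)
    (F : Finset ℕ)
    (pβ : (ℕ → ℕ) → (D → ℝ))
    (hpβdist : ∀ φ : ℕ → ℕ, IsDist (pβ φ))
    (hpβapprox : ∀ (φ : ℕ → ℕ) (q : D → ℝ), IsDist q →
      β * profProb n q S φ ≤ profProb n (pβ φ) S φ) :
    prEvent n p (fun y =>
        2 * ε ≤ |(∑ x ∈ S, g (p x)) - ∑ x ∈ S, g (pβ (profS n S y) x)|)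
      ≤ δ * (n + 1) ^ F.card / β
        + prEvent n p (fun y => ¬ Freqs (profS n S y) ⊆ ↑F) := by
  have hδ0 : 0 ≤ δ := le_trans (prEvent_nonneg hp.1 _) (hest p hp)
  set Bad : (Fin n → D) → Prop := fun y =>
    (2 * ε ≤ |(∑ x ∈ S, g (p x)) - ∑ x ∈ S, g (pβ (profS n S y) x)|)
      ∧ Freqs (profS n S y) ⊆ ↑F with hBad
  have hsplit : prEvent n p (fun y =>
      2 * ε ≤ |(∑ x ∈ S, g (p x)) - ∑ x ∈ S, g (pβ (profS n S y) x)|)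
      ≤ (∑ y : Fin n → D, if Bad y then seqProb n p y else 0)
        + prEvent n p (fun y => ¬ Freqs (profS n S y) ⊆ ↑F) := by
    unfold prEvent
    rw [← Finset.sum_add_distrib]
    refine Finset.sum_le_sum fun y _ => ?_
    by_cases h1 : Freqs (profS n S y) ⊆ ↑F <;>
      by_cases h2 : 2 * ε ≤ |(∑ x ∈ S, g (p x)) - ∑ x ∈ S, g (pβ (profS n S y) x)| <;>
      simp [hBad, h1, h2, seqProb_nonneg hp.1]
  refine hsplit.trans (add_le_add_left ?_ _)
  have hfib : (∑ y : Fin n → D, if Bad y then seqProb n p y else 0)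
      = ∑ k : ({x // x ∈ F} → Fin (n+1)), ∑ y : Fin n → D,
          if key n S F y = k then (if Bad y then seqProb n p y else 0) else 0 := by
    rw [Finset.sum_comm]
    refine Finset.sum_congr rfl fun y _ => ?_
    rw [Finset.sum_ite_eq (Finset.univ) (key n S F y)
      (fun _ => if Bad y then seqProb n p y else 0)]
    simp
  rw [hfib]
  have hk : ∀ k : ({x // x ∈ F} → Fin (n+1)),
      (∑ y : Fin n → D,
        if key n S F y = k then (if Bad y then seqProb n p y else 0) else 0) ≤ δ / β := by
    intro k
    by_cases hex : ∃ y₀, key n S F y₀ = k ∧ Bad y₀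
    · obtain ⟨y₀, hky, hb⟩ := hex
      have hφ : recO S n F k = profS n S y₀ := by rw [← hky]; exact recO_key hb.2
      have hle : (∑ y : Fin n → D,
          if key n S F y = k then (if Bad y then seqProb n p y else 0) else 0)
          ≤ profProb n p S (profS n S y₀) := by
        unfold profProb
        refine Finset.sum_le_sum fun y _ => ?_
        by_cases h1 : key n S F y = k
        · rw [if_pos h1]
          by_cases h2 : Bad y
          · rw [if_pos h2]
            have heq : profS n S y = profS n S y₀ := by
              rw [← recO_key h2.2, h1, hφ]
            rw [if_pos (show ∀ j, 1 ≤ j → profS n S y j = profS n S y₀ j from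
              fun j _ => by rw [heq])]
          · rw [if_neg h2]
            by_cases h3 : ∀ j, 1 ≤ j → profS n S y j = profS n S y₀ j
            · rw [if_pos h3]; exact seqProb_nonneg hp.1 y
            · rw [if_neg h3]
        · rw [if_neg h1]
          by_cases h3 : ∀ j, 1 ≤ j → profS n S y j = profS n S y₀ j
          · rw [if_pos h3]; exact seqProb_nonneg hp.1 y
          · rw [if_neg h3]
      exact hle.trans (profProb_le_of_bad n S g p hp fhat ε δ β hβ0 hβ1 hest
        pβ hpβdist hpβapprox y₀ hb.1)
    · push_neg at hex
      have hz : (∑ y : Fin n → D,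
          if key n S F y = k then (if Bad y then seqProb n p y else 0) else 0) = 0 := by
        refine Finset.sum_eq_zero fun y _ => ?_
        by_cases h1 : key n S F y = k
        · rw [if_pos h1, if_neg (hex y h1)]
        · rw [if_neg h1]
      rw [hz]
      exact div_nonneg hδ0 hβ0.le
  calc (∑ k : ({x // x ∈ F} → Fin (n+1)), ∑ y : Fin n → D,
          if key n S F y = k then (if Bad y then seqProb n p y else 0) else 0)
      ≤ ∑ _k : ({x // x ∈ F} → Fin (n+1)), δ / β :=
        Finset.sum_le_sum fun k _ => hk k
    _ = ((n + 1) ^ F.card : ℕ) * (δ / β) := by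
        rw [Finset.sum_const, nsmul_eq_mul]
        congr 1
        rw [Finset.card_univ, Fintype.card_fun, Fintype.card_fin, Fintype.card_coe]
    _ = δ * (n + 1) ^ F.card / β := by push_cast; ring


end

end PML
end

section
/- For a profile φ of length n ≥ 2k log k and any β-approximate PML distribution p^β_φ (with β ≥ exp(−εk log k), and all nonzero probabilities at least 1/k), we have Distinct(φ) ≤ S(p^β_φ) ≤ Distinct(φ) + εk. -/
open Finset
open scoped BigOperators Classical

namespace PML

noncomputable section

variable {D : Type*} [Fintype D] [DecidableEq D]

def Distinct (n : ℕ) (φ : ℕ → ℕ) : ℕ := ∑ j ∈ Finset.Icc 1 n, φ j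

def suppF (p : D → ℝ) : Finset D := Finset.univ.filter (fun x => p x ≠ 0)

def Constr (k : ℕ) (p : D → ℝ) : Prop :=
  IsDist p ∧ ∀ x, p x ≠ 0 → 1 / (k : ℝ) ≤ p x

/-- Any sequence matching the profile `φ` uses exactly `Distinct n φ` symbols. -/
lemma used_card (n : ℕ) (φ : ℕ → ℕ) (y : Fin n → D)
    (hm : ∀ j, 1 ≤ j → profS n Finset.univ y j = φ j) :
    (Finset.image y Finset.univ).card = Distinct n φ := by
  have key : Finset.image y Finset.univ =
      (Finset.Icc 1 n).biUnion (fun j => Finset.univ.filter (fun x => freq n y x = j)) := by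
    ext x
    simp only [Finset.mem_image, Finset.mem_biUnion, Finset.mem_Icc, Finset.mem_filter,
      Finset.mem_univ, true_and]
    constructor
    · rintro ⟨i, -, rfl⟩
      refine ⟨freq n y (y i), ⟨?_, ?_⟩, rfl⟩
      · have hi : i ∈ Finset.univ.filter (fun i' => y i' = y i) := by simp
        exact Finset.card_pos.mpr ⟨i, hi⟩
      · exact (Finset.card_filter_le _ _).trans (by simp)
    · rintro ⟨j, ⟨hj1, -⟩, hj⟩
      have hne : (Finset.univ.filter (fun i => y i = x)).Nonempty := by
        rw [← Finset.card_pos]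
        have : freq n y x = j := hj
        unfold freq at this
        omega
      obtain ⟨i, hi⟩ := hne
      exact ⟨i, (Finset.mem_filter.mp hi).2⟩
  rw [key, Finset.card_biUnion, Distinct]
  · exact Finset.sum_congr rfl (fun j hj => hm j (Finset.mem_Icc.mp hj).1)
  · intro j hj j' hj' hne
    simp only [Finset.disjoint_left, Finset.mem_filter, Finset.mem_univ, true_and]
    rintro x h1 h2
    exact hne (h1.symm.trans h2)

/-- A sequence with nonzero probability only uses symbols in the support. -/
lemma seq_supp {n : ℕ} {p : D → ℝ} {y : Fin n → D} (h : seqProb n p y ≠ 0) :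
    Finset.image y Finset.univ ⊆ suppF p := by
  intro x hx
  obtain ⟨i, -, rfl⟩ := Finset.mem_image.mp hx
  simp only [suppF, Finset.mem_filter, Finset.mem_univ, true_and]
  exact Finset.prod_ne_zero_iff.mp h i (Finset.mem_univ i)

lemma sum_supp {p : D → ℝ} : ∑ x ∈ suppF p, p x = ∑ x, p x := by
  exact Finset.sum_filter_ne_zero _

/-- The support of a constrained distribution has at most `k` elements. -/
lemma supp_card_le {k : ℕ} {p : D → ℝ} (hc : Constr k p) (hk : 0 < k) :
    ((suppF p).card : ℝ) ≤ k := by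
  have hk0 : (0:ℝ) < k := by exact_mod_cast hk
  have h1 : (suppF p).card • ((1:ℝ) / k) ≤ ∑ x ∈ suppF p, p x := by
    apply Finset.card_nsmul_le_sum
    intro x hx
    exact hc.2 x (by simpa [suppF] using hx)
  rw [sum_supp, hc.1.2, nsmul_eq_mul, mul_one_div, div_le_one hk0] at h1
  exact h1

/-- For a profile `φ` of length `n ≥ 2k log k` and any `β`-approximate PML
distribution `p^β_φ` (with `β ≥ e^{−εk log k}`, all nonzero probabilities at
least `1/k`, and `P(p^β_φ, φ) > 0`), one has
`Distinct(φ) ≤ S(p^β_φ) ≤ Distinct(φ) + εk`. -/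
theorem approx_pml_support_bounds (k n : ℕ) (hk : 2 ≤ k)
    (hn : 2 * (k : ℝ) * Real.log k ≤ n)
    (ε β : ℝ) (hε : 0 < ε)
    (hβ : Real.exp (-(ε * k * Real.log k)) ≤ β)
    (φ : ℕ → ℕ) (pβφ : D → ℝ) (hc : Constr k pβφ)
    (happrox : ∀ q : D → ℝ, Constr k q →
      β * profProb n q Finset.univ φ ≤ profProb n pβφ Finset.univ φ)
    (hpos : 0 < profProb n pβφ Finset.univ φ) :
    Distinct n φ ≤ (suppF pβφ).card ∧
      ((suppF pβφ).card : ℝ) ≤ Distinct n φ + ε * k := by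
  obtain ⟨⟨hp0, hp1⟩, hpk⟩ := hc
  have hk0 : (0:ℝ) < k := by positivity
  have hk1 : (1:ℝ) < k := by exact_mod_cast hk.trans_lt' one_lt_two
  have hL : 0 < Real.log k := Real.log_pos hk1
  have hn0 : 0 < n := by
    have h2 : (0:ℝ) < 2 * (k:ℝ) * Real.log k := by positivity
    have : (0:ℝ) < n := h2.trans_le hn
    exact_mod_cast this
  have hβ0 : 0 < β := lt_of_lt_of_le (Real.exp_pos _) hβ
  set f : (Fin n → D) → ℝ :=
    fun y => if (∀ j, 1 ≤ j → profS n Finset.univ y j = φ j) then seqProb n pβφ y else 0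
    with hfdef
  have hseq0 : ∀ (q : D → ℝ), (∀ x, 0 ≤ q x) → ∀ y : Fin n → D, 0 ≤ seqProb n q y :=
    fun q hq y => Finset.prod_nonneg fun i _ => hq _
  have hf0 : ∀ y, 0 ≤ f y := by
    intro y
    by_cases h : ∀ j, 1 ≤ j → profS n Finset.univ y j = φ j
    · simp only [hfdef, if_pos h]; exact hseq0 _ hp0 y
    · simp only [hfdef, if_neg h, le_refl]
  have hPsum : profProb n pβφ Finset.univ φ = ∑ y : Fin n → D, f y := rfl
  -- extract a positive-probability sequence matching the profile
  obtain ⟨y0, hy0⟩ : ∃ y : Fin n → D, 0 < f y := by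
    by_contra h
    push_neg at h
    have := Finset.sum_nonpos (fun y (_ : y ∈ Finset.univ) => h y)
    rw [hPsum] at hpos
    exact absurd hpos (not_lt.mpr this)
  have hy0m : ∀ j, 1 ≤ j → profS n Finset.univ y0 j = φ j := by
    by_contra h
    simp only [hfdef, if_neg h] at hy0
    exact lt_irrefl 0 hy0
  have hy0s : seqProb n pβφ y0 ≠ 0 := by
    intro h
    simp only [hfdef, if_pos hy0m, h] at hy0
    exact lt_irrefl 0 hy0
  have hdcard : (Finset.image y0 Finset.univ).card = Distinct n φ := used_card n φ y0 hy0m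
  have hlow : Distinct n φ ≤ (suppF pβφ).card :=
    hdcard ▸ Finset.card_le_card (seq_supp hy0s)
  refine ⟨hlow, ?_⟩
  by_contra hub
  push_neg at hub
  set P := profProb n pβφ Finset.univ φ with hPdef
  set d := Distinct n φ with hddef
  set S := (suppF pβφ).card with hSdef
  have hd1 : 1 ≤ d := by
    rw [← hdcard]
    have : y0 ⟨0, hn0⟩ ∈ Finset.image y0 Finset.univ :=
      Finset.mem_image_of_mem _ (Finset.mem_univ _)
    exact Finset.card_pos.mpr ⟨_, this⟩
  have hSk : (S:ℝ) ≤ k := supp_card_le ⟨⟨hp0, hp1⟩, hpk⟩ (by omega)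
  set m := S - d with hmdef
  have hmcast : (m:ℝ) = (S:ℝ) - d := by
    rw [hmdef, Nat.cast_sub hlow]
  have hmε : ε * k < m := by rw [hmcast]; linarith [hub]
  have hm0 : (0:ℝ) ≤ m := Nat.cast_nonneg m
  have hmk : (m:ℝ) ≤ k := by
    rw [hmcast]
    have : (0:ℝ) ≤ d := Nat.cast_nonneg d
    linarith
  have hbase : (0:ℝ) ≤ 1 - (m:ℝ)/k := by
    rw [sub_nonneg, div_le_one hk0]; exact hmk
  set A := (suppF pβφ).powersetCard d with hA
  have hmem : ∀ y : Fin n → D, f y ≠ 0 → Finset.image y Finset.univ ∈ A := by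
    intro y hy
    have hm' : ∀ j, 1 ≤ j → profS n Finset.univ y j = φ j := by
      by_contra h
      exact hy (by simp only [hfdef, if_neg h])
    have hs : seqProb n pβφ y ≠ 0 := by
      intro h
      exact hy (by simp only [hfdef, if_pos hm', h])
    exact Finset.mem_powersetCard.mpr ⟨seq_supp hs, used_card n φ y hm'⟩
  set B : Finset (Fin n → D) :=
    Finset.univ.filter (fun y : Fin n → D => Finset.image y Finset.univ ∈ A) with hB
  have step1 : P = ∑ T ∈ A, ∑ y ∈ B.filter (fun y => Finset.image y Finset.univ = T), f y := by
    rw [hPsum,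
      Finset.sum_fiberwise_of_maps_to (fun y hy => (Finset.mem_filter.mp hy).2) f,
      Finset.sum_filter_of_ne (fun y _ hy => hmem y hy)]
  -- per-piece bound
  have key : ∀ T ∈ A,
      ∑ y ∈ B.filter (fun y => Finset.image y Finset.univ = T), f y
        ≤ (1 - (m:ℝ)/k)^n * (P / β) := by
    intro T hT
    obtain ⟨hTsub, hTd⟩ := Finset.mem_powersetCard.mp hT
    have hTpos : ∀ x ∈ T, 0 < pβφ x := by
      intro x hx
      have hx' : pβφ x ≠ 0 := by
        have := hTsub hx
        simpa [suppF] using this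
      exact lt_of_le_of_ne (hp0 x) (Ne.symm hx')
    set sT := ∑ x ∈ T, pβφ x with hsT
    have hTne : T.Nonempty := Finset.card_pos.mp (by omega)
    have hsTpos : 0 < sT := Finset.sum_pos hTpos hTne
    -- sT ≤ 1 - m/k
    have hsupp1 : ∑ x ∈ suppF pβφ, pβφ x = 1 := by rw [sum_supp, hp1]
    have hsdiff : ∑ x ∈ suppF pβφ \ T, pβφ x + sT = ∑ x ∈ suppF pβφ, pβφ x :=
      Finset.sum_sdiff hTsub
    have hcard_sdiff : (suppF pβφ \ T).card = m := by
      rw [Finset.card_sdiff_of_subset hTsub, hTd]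
    have hlb : (m:ℝ) * (1/(k:ℝ)) ≤ ∑ x ∈ suppF pβφ \ T, pβφ x := by
      have := Finset.card_nsmul_le_sum (suppF pβφ \ T) pβφ (1/(k:ℝ))
        (fun x hx => hpk x (by
          have := (Finset.mem_sdiff.mp hx).1
          simpa [suppF] using this))
      rwa [hcard_sdiff, nsmul_eq_mul] at this
    have hsTle : sT ≤ 1 - (m:ℝ)/k := by
      have : (m:ℝ)/k = (m:ℝ) * (1/(k:ℝ)) := by ring
      rw [this]
      linarith
    have hsT1 : sT ≤ 1 := by
      have : (0:ℝ) ≤ (m:ℝ)/k := div_nonneg hm0 hk0.le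
      linarith
    -- conditional distribution
    set q : D → ℝ := fun x => if x ∈ T then pβφ x / sT else 0 with hq
    have hq0 : ∀ x, 0 ≤ q x := by
      intro x
      by_cases h : x ∈ T
      · simp only [hq, if_pos h]; exact div_nonneg (hp0 x) hsTpos.le
      · simp only [hq, if_neg h, le_refl]
    have hq1 : ∑ x, q x = 1 := by
      rw [hq]
      rw [Finset.sum_ite_mem, Finset.univ_inter, ← Finset.sum_div, ← hsT,
        div_self hsTpos.ne']
    have hqk : ∀ x, q x ≠ 0 → 1/(k:ℝ) ≤ q x := by
      intro x hx
      have hxT : x ∈ T := by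
        by_contra h
        exact hx (by simp [hq, h])
      have hpx : pβφ x ≠ 0 := (hTpos x hxT).ne'
      have h1 : (1:ℝ)/k ≤ pβφ x := hpk x hpx
      have h2 : pβφ x ≤ pβφ x / sT := by
        rw [le_div_iff₀ hsTpos]
        exact mul_le_of_le_one_right (hp0 x) hsT1
      simp only [hq, if_pos hxT]
      linarith
    have hqP : profProb n q Finset.univ φ ≤ P / β := by
      rw [le_div_iff₀ hβ0, mul_comm]
      exact happrox q ⟨⟨hq0, hq1⟩, hqk⟩
    have hqPpos : 0 ≤ profProb n q Finset.univ φ := by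
      apply Finset.sum_nonneg
      intro y _
      split
      · exact hseq0 q hq0 y
      · exact le_refl 0
    -- pointwise: on the fiber, f y = sT^n * g y
    have hpoint : ∀ y ∈ B.filter (fun y => Finset.image y Finset.univ = T),
        f y = sT^n * (if (∀ j, 1 ≤ j → profS n Finset.univ y j = φ j)
          then seqProb n q y else 0) := by
      intro y hy
      have hyT : Finset.image y Finset.univ = T := (Finset.mem_filter.mp hy).2
      by_cases hmy : ∀ j, 1 ≤ j → profS n Finset.univ y j = φ j
      · rw [hfdef]
        simp only [if_pos hmy]
        have hmemT : ∀ i : Fin n, y i ∈ T := by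
          intro i
          rw [← hyT]
          exact Finset.mem_image_of_mem _ (Finset.mem_univ i)
        have : seqProb n q y = seqProb n pβφ y / sT^n := by
          unfold seqProb
          calc ∏ i : Fin n, q (y i) = ∏ i : Fin n, pβφ (y i) / sT := by
                apply Finset.prod_congr rfl
                intro i _
                simp [hq, if_pos (hmemT i)]
            _ = (∏ i : Fin n, pβφ (y i)) / sT ^ n := by
                rw [Finset.prod_div_distrib, Finset.prod_const, Finset.card_univ,
                  Fintype.card_fin]
        rw [this, mul_div_cancel₀ _ (pow_ne_zero n hsTpos.ne')]
      · rw [hfdef]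
        simp only [if_neg hmy, mul_zero]
    calc ∑ y ∈ B.filter (fun y => Finset.image y Finset.univ = T), f y
        = ∑ y ∈ B.filter (fun y => Finset.image y Finset.univ = T),
            sT^n * (if (∀ j, 1 ≤ j → profS n Finset.univ y j = φ j)
              then seqProb n q y else 0) := Finset.sum_congr rfl hpoint
      _ ≤ ∑ y : Fin n → D, sT^n * (if (∀ j, 1 ≤ j → profS n Finset.univ y j = φ j)
              then seqProb n q y else 0) := by
          apply Finset.sum_le_sum_of_subset_of_nonneg (Finset.subset_univ _)
          intro y _ _
          apply mul_nonneg (pow_nonneg hsTpos.le n)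
          split
          · exact hseq0 q hq0 y
          · exact le_refl 0
      _ = sT^n * profProb n q Finset.univ φ := by rw [← Finset.mul_sum]; rfl
      _ ≤ (1 - (m:ℝ)/k)^n * (P / β) := by
          apply mul_le_mul
          · exact pow_le_pow_left₀ hsTpos.le hsTle n
          · exact hqP
          · exact hqPpos
          · exact pow_nonneg hbase n
  -- assemble
  have hPle : P ≤ (S.choose d : ℝ) * ((1 - (m:ℝ)/k)^n * (P / β)) := by
    calc P = ∑ T ∈ A, ∑ y ∈ B.filter (fun y => Finset.image y Finset.univ = T), f y := step1
      _ ≤ ∑ _T ∈ A, (1 - (m:ℝ)/k)^n * (P / β) := Finset.sum_le_sum key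
      _ = (A.card : ℝ) * ((1 - (m:ℝ)/k)^n * (P / β)) := by
          rw [Finset.sum_const, nsmul_eq_mul]
      _ = (S.choose d : ℝ) * ((1 - (m:ℝ)/k)^n * (P / β)) := by
          rw [hA, Finset.card_powersetCard, hSdef]
  -- numeric bound: choose * power < β
  have hnum : (S.choose d : ℝ) * (1 - (m:ℝ)/k)^n < β := by
    have hch : (S.choose d : ℝ) ≤ (k:ℝ)^m := by
      have e1 : S.choose d = S.choose m := (Nat.choose_symm hlow).symm
      calc (S.choose d : ℝ) = (S.choose m : ℝ) := by rw [e1]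
        _ ≤ ((S^m : ℕ) : ℝ) := by exact_mod_cast Nat.choose_le_pow S m
        _ = ((S:ℝ))^m := by push_cast; ring
        _ ≤ (k:ℝ)^m := pow_le_pow_left₀ (Nat.cast_nonneg S) hSk m
    have hkexp : (k:ℝ)^m = Real.exp ((m:ℝ) * Real.log k) := by
      conv_lhs => rw [← Real.exp_log hk0]
      rw [← Real.exp_nat_mul]
    have h2 : (1 - (m:ℝ)/k)^n ≤ Real.exp ((n:ℝ) * (-((m:ℝ)/k))) := by
      rw [Real.exp_nat_mul]
      apply pow_le_pow_left₀ hbase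
      linarith [Real.add_one_le_exp (-((m:ℝ)/k))]
    calc (S.choose d : ℝ) * (1 - (m:ℝ)/k)^n
        ≤ Real.exp ((m:ℝ) * Real.log k) * Real.exp ((n:ℝ) * (-((m:ℝ)/k))) := by
          apply mul_le_mul (hkexp ▸ hch) h2 (pow_nonneg hbase n) (Real.exp_pos _).le
      _ = Real.exp ((m:ℝ) * Real.log k + (n:ℝ) * (-((m:ℝ)/k))) := (Real.exp_add _ _).symm
      _ ≤ Real.exp (-((m:ℝ) * Real.log k)) := by
          apply Real.exp_le_exp.mpr
          have e1 : 2 * (k:ℝ) * Real.log k * ((m:ℝ)/k) ≤ (n:ℝ) * ((m:ℝ)/k) :=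
            mul_le_mul_of_nonneg_right hn (div_nonneg hm0 hk0.le)
          have e2 : 2 * (k:ℝ) * Real.log k * ((m:ℝ)/k) = 2 * (m:ℝ) * Real.log k := by
            field_simp
          rw [e2] at e1
          have e3 : (n:ℝ) * (-((m:ℝ)/k)) = -((n:ℝ) * ((m:ℝ)/k)) := by ring
          rw [e3]
          linarith
      _ < Real.exp (-(ε * k * Real.log k)) := by
          apply Real.exp_lt_exp.mpr
          have : ε * k * Real.log k < (m:ℝ) * Real.log k :=
            mul_lt_mul_of_pos_right hmε hL
          linarith
      _ ≤ β := hβ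
  have hPβ : 0 < P / β := div_pos hpos hβ0
  have hfinal : (S.choose d : ℝ) * ((1 - (m:ℝ)/k)^n * (P / β)) < β * (P / β) := by
    rw [← mul_assoc]
    exact mul_lt_mul_of_pos_right hnum hPβ
  have hβP : β * (P / β) = P := by field_simp
  rw [hβP] at hfinal
  linarith

end

end PML
end
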